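/- Let $s_0 \in \{0, \dots, p_0 - 1\}$, $L \ge 1$, and let $a$ be uniform on $\{0, \dots, L-1\}$. Let $P$ be a positive integer coprime to $p_0$ with $P \le L$. Then the statistical distance between the distribution of $(s_0 + a p_0) \bmod P$ and the uniform distribution on $\{0, \dots, P - 1\}$ is at most $P / L$. -/

import Mathlib

lemma crt_ceil_bound (L P c : ℕ) (hL : 1 ≤ L) (hP : 0 < P) (hc : c < P)
    (hPL : P ≤ L) :
    |((⌈(((L : ℚ) - c) / P)⌉ : ℚ)) / L - 1 / P| ≤ 1 / L := by
  have hL0 : (0 : ℚ) < L := by exact_mod_cast hL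
  have hP0 : (0 : ℚ) < P := by exact_mod_cast hP
  have hc' : (c : ℚ) < P := by exact_mod_cast hc
  have hc0 : (0 : ℚ) ≤ c := by positivity
  set k : ℤ := ⌈(((L : ℚ) - c) / P)⌉ with hk
  have h1 : ((L : ℚ) - c) / P ≤ k := Int.le_ceil _
  have h2 : (k : ℚ) < ((L : ℚ) - c) / P + 1 := Int.ceil_lt_add_one _
  rw [div_le_iff₀ hP0] at h1
  rw [← sub_lt_iff_lt_add, lt_div_iff₀ hP0] at h2
  have key : |(k : ℚ) * P - L| ≤ P := by
    rw [abs_le]; constructor <;> nlinarith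
  have heq : (k : ℚ) / L - 1 / P = ((k : ℚ) * P - L) / (L * P) := by
    field_simp
  rw [heq, abs_div, abs_of_pos (by positivity : (0:ℚ) < L * P)]
  calc |(k : ℚ) * P - L| / (L * P) ≤ (P : ℚ) / (L * P) := by gcongr
    _ = 1 / L := by field_simp

theorem crt_privacy_statistical_distance (p₀ s₀ L P : ℕ)
    (hs₀ : s₀ < p₀) (hL : 1 ≤ L) (hP : 0 < P)
    (hcop : Nat.Coprime P p₀) (hPL : P ≤ L) :
    (1 / 2 : ℚ) *
        ∑ r ∈ Finset.range P,
          |(((Finset.range L).filter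
              (fun a => (s₀ + a * p₀) % P = r)).card : ℚ) / L - 1 / P| ≤
      (P : ℚ) / L := by
  haveI : NeZero P := ⟨hP.ne'⟩
  set u : (ZMod P)ˣ := ZMod.unitOfCoprime p₀ hcop.symm with hu
  have hup : (u : ZMod P) = (p₀ : ZMod P) := ZMod.coe_unitOfCoprime _ _
  have hterm : ∀ r ∈ Finset.range P,
      |(((Finset.range L).filter
          (fun a => (s₀ + a * p₀) % P = r)).card : ℚ) / L - 1 / P| ≤ 1 / L := by
    intro r hr
    rw [Finset.mem_range] at hr
    set c : ℕ := (((r : ZMod P) - (s₀ : ZMod P)) * (↑u⁻¹ : ZMod P)).val with hc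
    have hcP : c < P := ZMod.val_lt _
    have key : ∀ a : ℕ, (s₀ + a * p₀) % P = r ↔ a ≡ c [MOD P] := by
      intro a
      have h1 : (s₀ + a * p₀) % P = r ↔
          ((s₀ + a * p₀ : ℕ) : ZMod P) = (r : ZMod P) := by
        rw [ZMod.natCast_eq_natCast_iff]
        unfold Nat.ModEq
        rw [Nat.mod_eq_of_lt hr]
      have h2 : ((s₀ + a * p₀ : ℕ) : ZMod P) = (r : ZMod P) ↔
          (a : ZMod P) = (c : ZMod P) := by
        push_cast
        rw [hc, show (((((r : ZMod P) - (s₀ : ZMod P)) * (↑u⁻¹ : ZMod P)).val : ℕ) :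
            ZMod P) = ((r : ZMod P) - (s₀ : ZMod P)) * (↑u⁻¹ : ZMod P) from
          ZMod.natCast_rightInverse _]
        rw [Units.eq_mul_inv_iff_mul_eq, hup]
        constructor <;> intro h <;> linear_combination h
      rw [h1, h2, ZMod.natCast_eq_natCast_iff]
    have hcard : ((Finset.range L).filter
        (fun a => (s₀ + a * p₀) % P = r)).card = L.count (· ≡ c [MOD P]) := by
      rw [Nat.count_eq_card_filter_range]
      congr 1
      apply Finset.filter_congr
      intro a _
      simpa using key a
    have hceil := Nat.count_modEq_card_eq_ceil (b := L) (r := P) hP c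
    rw [Nat.mod_eq_of_lt hcP] at hceil
    have hcast : ((((Finset.range L).filter
        (fun a => (s₀ + a * p₀) % P = r)).card : ℕ) : ℚ)
        = ((⌈(((L : ℚ) - c) / P)⌉ : ℤ) : ℚ) := by
      rw [hcard]; exact_mod_cast congrArg (fun z : ℤ => (z : ℚ)) hceil
    rw [hcast]
    exact crt_ceil_bound L P c hL hP hcP hPL
  have hsum : ∑ r ∈ Finset.range P,
      |(((Finset.range L).filter
          (fun a => (s₀ + a * p₀) % P = r)).card : ℚ) / L - 1 / P|
      ≤ (P : ℚ) / L := by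
    calc _ ≤ ∑ _r ∈ Finset.range P, (1 / L : ℚ) := Finset.sum_le_sum hterm
      _ = (P : ℚ) / L := by simp [Finset.sum_const]; ring
  have hnonneg : (0 : ℚ) ≤ (P : ℚ) / L := by positivity
  nlinarith [hsum, hnonneg]
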